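/- Let P ⊆ ℝ^d be a finite union of closed integral unit cubes and let I ⊆ {1,…,d}. Then the number of v ∈ ℤ^d such that the relatively open integral unit cube B(v,I) is contained in P equals the number of points x ∈ P such that x_i ∈ ℤ + 1/2 for every i ∈ I and x_i ∈ ℤ for every i ∉ I. -/
import Mathlib


/-- The relatively open integral unit cube `B(v, I)`. -/
def openCube {d : ℕ} (v : Fin d → ℤ) (I : Finset (Fin d)) : Set (Fin d → ℝ) :=
  {x | ∀ i, (i ∈ I → (v i : ℝ) < x i ∧ x i < v i + 1) ∧ (i ∉ I → x i = v i)}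

/-- The closed integral unit cube `v + [0,1]^d`. -/
def closedCube {d : ℕ} (v : Fin d → ℤ) : Set (Fin d → ℝ) :=
  {x | ∀ i, (v i : ℝ) ≤ x i ∧ x i ≤ v i + 1}

/-- The center of the relatively open cube. -/
noncomputable def ctr {d : ℕ} (I : Finset (Fin d)) (v : Fin d → ℤ) : Fin d → ℝ :=
  fun i => (v i : ℝ) + if i ∈ I then 1 / 2 else 0

lemma ctr_mem_openCube {d : ℕ} (I : Finset (Fin d)) (v : Fin d → ℤ) :
    ctr I v ∈ openCube v I := by
  intro i
  constructor
  · intro hi; simp only [ctr, if_pos hi]; constructor <;> norm_num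
  · intro hi; simp [ctr, if_neg hi]

lemma ctr_inj {d : ℕ} (I : Finset (Fin d)) : Function.Injective (ctr I) := by
  intro v w h
  funext i
  have := congrFun h i
  simp only [ctr] at this
  by_cases hi : i ∈ I <;> simp [hi] at this <;> exact this

lemma key {d : ℕ} (S : Finset (Fin d → ℤ)) (I : Finset (Fin d)) (v : Fin d → ℤ)
    (h : ctr I v ∈ ⋃ w ∈ S, closedCube w) :
    openCube v I ⊆ ⋃ w ∈ S, closedCube w := by
  obtain ⟨w, hw, hc⟩ := Set.mem_iUnion₂.mp h
  intro x hx
  refine Set.mem_iUnion₂.mpr ⟨w, hw, ?_⟩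
  intro i
  have hci := hc i
  by_cases hi : i ∈ I
  · have hxi := (hx i).1 hi
    simp only [ctr, if_pos hi] at hci
    have h1 : (w i : ℝ) < v i + 1 := by linarith [hci.1]
    have h2 : (v i : ℝ) < w i + 1 := by linarith [hci.2]
    have h1' : w i < v i + 1 := by exact_mod_cast h1
    have h2' : v i < w i + 1 := by exact_mod_cast h2
    have hwv : w i = v i := by omega
    rw [hwv]
    exact ⟨le_of_lt hxi.1, le_of_lt hxi.2⟩
  · have hxi := (hx i).2 hi
    simp only [ctr, if_neg hi, add_zero] at hci
    rw [hxi]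
    exact hci

theorem cube_count_eq_half_integer_point_count (d : ℕ) (S : Finset (Fin d → ℤ))
    (P : Set (Fin d → ℝ)) (hP : P = ⋃ v ∈ S, closedCube v)
    (I : Finset (Fin d)) :
    {v : Fin d → ℤ | openCube v I ⊆ P}.ncard
      = {x : Fin d → ℝ | x ∈ P ∧ ∀ i,
          (i ∈ I → ∃ m : ℤ, x i = (m : ℝ) + 1 / 2) ∧
          (i ∉ I → ∃ m : ℤ, x i = (m : ℝ))}.ncard := by
  have himg : {x : Fin d → ℝ | x ∈ P ∧ ∀ i,
          (i ∈ I → ∃ m : ℤ, x i = (m : ℝ) + 1 / 2) ∧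
          (i ∉ I → ∃ m : ℤ, x i = (m : ℝ))}
      = ctr I '' {v : Fin d → ℤ | openCube v I ⊆ P} := by
    ext x
    constructor
    · rintro ⟨hxP, hx⟩
      refine ⟨fun i => if hi : i ∈ I then Classical.choose ((hx i).1 hi)
        else Classical.choose ((hx i).2 hi), ?_, ?_⟩
      · show openCube _ I ⊆ P
        rw [hP]
        apply key
        have : ctr I (fun i => if hi : i ∈ I then Classical.choose ((hx i).1 hi)
            else Classical.choose ((hx i).2 hi)) = x := by
          funext i
          simp only [ctr]
          by_cases hi : i ∈ I
          · simp only [if_pos hi, dif_pos hi]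
            exact (Classical.choose_spec ((hx i).1 hi)).symm
          · simp only [if_neg hi, dif_neg hi, add_zero]
            exact (Classical.choose_spec ((hx i).2 hi)).symm
        rw [this, ← hP]; exact hxP
      · funext i
        simp only [ctr]
        by_cases hi : i ∈ I
        · simp only [if_pos hi, dif_pos hi]
          exact (Classical.choose_spec ((hx i).1 hi)).symm
        · simp only [if_neg hi, dif_neg hi, add_zero]
          exact (Classical.choose_spec ((hx i).2 hi)).symm
    · rintro ⟨v, hv, rfl⟩
      refine ⟨hv (ctr_mem_openCube I v), fun i => ⟨fun hi => ⟨v i, ?_⟩, fun hi => ⟨v i, ?_⟩⟩⟩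
      · simp [ctr, if_pos hi]
      · simp [ctr, if_neg hi]
  rw [himg, Set.ncard_image_of_injective _ (ctr_inj I)]
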